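/- Consider a FIFO queue with constant service rate 1/τ (i.e., one job is completed every τ time units) where jobs arrive at times t₁ ≤ t₂ ≤ ⋯. Suppose queue Q_U receives the same jobs as queue Q_L but each job's arrival is delayed by Δ ≥ 0 (job i arrives at t_i + Δ in Q_U instead of t_i in Q_L). Then the position of the m-th job in Q_U at time t + Δ is at most its position in Q_L at time t, for all t ≥ t_m: that is, Q_U^{(m)}(t+Δ) ≤ Q_L^{(m)}(t). -/

import Mathlib

open scoped Classical

/-- Departure time of the n-th job in a FIFO queue with deterministic service
time τ per job and arrival times `a`. -/
noncomputable def departure (τ : ℝ) (a : ℕ → ℝ) : ℕ → ℝ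
  | 0 => a 0 + τ
  | n + 1 => max (a (n + 1)) (departure τ a n) + τ

/-- Position of job m at time t: the number of jobs among the first m+1 that are
still in the queue (at or ahead of job m), which is 0 once job m has been served. -/
noncomputable def queuePos (τ : ℝ) (a : ℕ → ℝ) (m : ℕ) (t : ℝ) : ℕ :=
  ((Finset.range (m + 1)).filter fun i => t < departure τ a i).card

/-- If every arrival is delayed by Δ ≥ 0, then the position of the m-th job in the
delayed queue at time t + Δ is at most its position in the original queue at time t,
for all t after job m's arrival. -/
theorem queuePos_delay_le (τ : ℝ) (hτ : 0 < τ) (a : ℕ → ℝ) (ha : Monotone a)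
    (Δ : ℝ) (hΔ : 0 ≤ Δ) (m : ℕ) (t : ℝ) (ht : a m ≤ t) :
    queuePos τ (fun i => a i + Δ) m (t + Δ) ≤ queuePos τ a m t := by
  have key : ∀ n, departure τ (fun i => a i + Δ) n ≤ departure τ a n + Δ := by
    intro n
    induction n with
    | zero => simp [departure]; linarith
    | succ n ih =>
      simp only [departure]
      have : max (a (n + 1) + Δ) (departure τ (fun i => a i + Δ) n)
          ≤ max (a (n + 1)) (departure τ a n) + Δ := by
        apply max_le
        · exact add_le_add_left (le_max_left _ _) Δ
        · exact ih.trans (add_le_add_left (le_max_right _ _) Δ)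
      linarith
  unfold queuePos
  apply Finset.card_le_card
  intro i hi
  simp only [Finset.mem_filter] at hi ⊢
  refine ⟨hi.1, ?_⟩
  have := (hi.2).trans_le (key i)
  linarith
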